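/- (Correctness of the clique reduction.) In the clique-reduction instance, assume 2 ≤ k ≤ n, 0 < ε < 1/(k+1), 0 < δ < 1 with (1−δ)/2 − kδK/(nε) > 0, and t > 0 with (k+1)·(K/ε + αt)/(K + αt) < 1/ε where α = 1/(2m). Then G contains a clique on k vertices if and only if there exists a (fractional) solution b with E[value(b)] ≥ V = (1−δ)·K + (δ(n−k)/n)·(K/ε). -/

import Mathlib

open Finset

/-- Value obtained in scenario `σ₀` of the clique-reduction instance (budget `Kr`):
every edge keyword receives one click and vertex keywords receive none; edge keywords
have cost-per-click 1. -/
noncomputable def crVal0 {V : Type*} [Fintype V] [DecidableEq V] (G : SimpleGraph V)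
    [DecidableRel G.Adj] (Kr : ℝ) (bE : Sym2 V → ℝ) : ℝ :=
  (∑ e ∈ G.edgeFinset, bE e * 1) /
    max 1 ((∑ e ∈ G.edgeFinset, bE e * 1 * 1) / Kr)

/-- Value obtained in scenario `σ_v` of the clique-reduction instance (budget `Kr`):
keyword `v` (cost-per-click `ε`) receives `Kr/ε` clicks, each edge keyword incident to `v`
(cost-per-click 1) receives `t` clicks, and all other keywords receive none. -/
noncomputable def crValv {V : Type*} [Fintype V] [DecidableEq V] (G : SimpleGraph V)
    [DecidableRel G.Adj] (Kr ε t : ℝ) (bE : Sym2 V → ℝ) (bV : V → ℝ) (v : V) : ℝ :=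
  (bV v * (Kr / ε) + ∑ e ∈ G.edgeFinset, bE e * (if v ∈ e then t else 0)) /
    max 1 ((bV v * ε * (Kr / ε) +
      ∑ e ∈ G.edgeFinset, bE e * 1 * (if v ∈ e then t else 0)) / Kr)

/-- Expected value in the clique-reduction instance: scenario `σ₀` has probability `1−δ`
and each scenario `σ_v` has probability `δ/n`, where `n` is the number of vertices. -/
noncomputable def crEv {V : Type*} [Fintype V] [DecidableEq V] (G : SimpleGraph V)
    [DecidableRel G.Adj] (Kr ε δ t : ℝ) (bE : Sym2 V → ℝ) (bV : V → ℝ) : ℝ :=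
  (1 - δ) * crVal0 G Kr bE +
    ∑ v : V, (δ / (Fintype.card V : ℝ)) * crValv G Kr ε t bE bV v

lemma aux_sym2_card {α : Type*} [DecidableEq α] (s : Finset α) :
    (s.sym2.filter fun e => ¬ e.IsDiag).card = s.card.choose 2 := by
  have h1 : s.sym2.filter (fun e => e.IsDiag) = s.image Sym2.diag := by
    ext e
    induction e using Sym2.ind with
    | _ x y =>
      simp only [Finset.mem_filter, Finset.mk_mem_sym2_iff, Sym2.mk_isDiag_iff,
        Finset.mem_image]
      constructor
      · rintro ⟨⟨hx, _⟩, rfl⟩; exact ⟨x, hx, rfl⟩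
      · rintro ⟨a, ha, h⟩
        have : a = x ∧ a = y := by
          have := h
          rw [Sym2.diag, Sym2.eq_iff] at this
          tauto
        obtain ⟨rfl, rfl⟩ := this
        exact ⟨⟨ha, ha⟩, rfl⟩
  have h2 : (s.sym2.filter (fun e => e.IsDiag)).card = s.card := by
    rw [h1, Finset.card_image_of_injective _ Sym2.diag_injective]
  have h3 := Finset.card_filter_add_card_filter_not
    (s := s.sym2) (p := fun e => e.IsDiag)
  rw [Finset.card_sym2] at h3
  have h4 : (s.card + 1).choose 2 = s.card + s.card.choose 2 := by
    rw [Nat.choose_succ_succ s.card 1, Nat.choose_one_right]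
  omega

lemma aux_val_le {N S K : ℝ} (hK : 0 < K) (hN : 0 ≤ N) (hNS : N ≤ S) :
    N / max 1 (S / K) ≤ K := by
  rcases le_or_gt (S / K) 1 with h | h
  · rw [max_eq_left h, div_one]
    have : S ≤ K := by rwa [div_le_one hK] at h
    linarith
  · rw [max_eq_right h.le, div_le_iff₀ (by positivity)]
    have e : K * (S / K) = S := by field_simp
    rw [e]; exact hNS

lemma aux_val_le_div {N S K ε : ℝ} (hK : 0 < K) (hε : 0 < ε) (hN : 0 ≤ N)
    (h : ε * N ≤ S) : N / max 1 (S / K) ≤ K / ε := by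
  rcases le_or_gt (S / K) 1 with hc | hc
  · rw [max_eq_left hc, div_one, le_div_iff₀ hε]
    have : S ≤ K := by rwa [div_le_one hK] at hc
    nlinarith
  · rw [max_eq_right hc.le, div_le_div_iff₀ (by positivity) hε]
    have e : K * (S / K) = S := by field_simp
    rw [e]; nlinarith

lemma aux_caseA {K ε t α b T : ℝ} (hK : 0 < K) (hε0 : 0 < ε) (hε1 : ε < 1)
    (ht : 0 < t) (hα : 0 < α) (hb0 : 0 ≤ b) (hb1 : b ≤ 1) (hT : α ≤ T) :
    (b * (K / ε) + t * T) / max 1 ((b * K + t * T) / K) ≤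
      K * (K / ε + t * α) / (K + t * α) := by
  have hc0 : 0 < K / ε := by positivity
  have hc : (K / ε) * ε = K := div_mul_cancel₀ K hε0.ne'
  have hKtα : 0 < K + t * α := by positivity
  set c := K / ε with hcdef
  rcases le_or_gt ((b * K + t * T) / K) 1 with h | h
  · rw [max_eq_left h, div_one, le_div_iff₀ hKtα]
    have hS : b * K + t * T ≤ K := by rwa [div_le_one hK] at h
    have hbb : b * K + b * (t * α) ≤ K := by
      have f1 : t * α ≤ t * T := mul_le_mul_of_nonneg_left hT ht.le
      have f2 : 0 ≤ (1 - b) * (t * α) := mul_nonneg (by linarith) (by positivity)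
      nlinarith
    have key : (b * K + ε * (t * T)) * (K + t * α) ≤ K * (K + ε * (t * α)) := by
      nlinarith [mul_nonneg (mul_nonneg hε0.le hKtα.le) (by linarith : (0:ℝ) ≤ K - (b*K + t*T)),
        mul_nonneg (mul_nonneg (by linarith : (0:ℝ) ≤ 1 - ε) hK.le)
          (by linarith : (0:ℝ) ≤ K - (b * K + b * (t * α)))]
    have e1 : ε * ((b * c + t * T) * (K + t * α)) = (b * K + ε * (t * T)) * (K + t * α) := by
      rw [← hc]; ring
    have e2 : ε * (K * (c + t * α)) = K * (K + ε * (t * α)) := by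
      rw [← hc]; ring
    have : ε * ((b * c + t * T) * (K + t * α)) ≤ ε * (K * (c + t * α)) := by
      rw [e1, e2]; exact key
    have := le_of_mul_le_mul_left this hε0
    linarith [this]
  · rw [max_eq_right h.le, div_le_div_iff₀ (by positivity) hKtα]
    have e0 : K * (c + t * α) * ((b * K + t * T) / K) = (c + t * α) * (b * K + t * T) := by
      field_simp
    rw [e0]
    have hbα : 0 ≤ T - b * α := by nlinarith
    have key : (b * K + ε * (t * T)) * (K + t * α) ≤ (K + ε * (t * α)) * (b * K + t * T) := by
      nlinarith [mul_nonneg (mul_nonneg (mul_nonneg ht.le hK.le)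
        (by linarith : (0:ℝ) ≤ 1 - ε)) hbα]
    have e1 : ε * ((b * c + t * T) * (K + t * α)) = (b * K + ε * (t * T)) * (K + t * α) := by
      rw [← hc]; ring
    have e2 : ε * ((c + t * α) * (b * K + t * T)) = (K + ε * (t * α)) * (b * K + t * T) := by
      rw [← hc]; ring
    have : ε * ((b * c + t * T) * (K + t * α)) ≤ ε * ((c + t * α) * (b * K + t * T)) := by
      rw [e1, e2]; exact key
    exact le_of_mul_le_mul_left this hε0


set_option maxHeartbeats 1000000 in
/-- **Correctness of the clique reduction.** Under the stated parameter choices, `G` contains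
a clique on `k` vertices if and only if some (fractional) solution of the clique-reduction
instance has expected value at least `V = (1−δ)·K + (δ(n−k)/n)·(K/ε)`, where `K = k(k−1)/2`
and `α = 1/(2m)`. -/
theorem stmt_17 {V : Type*} [Fintype V] [DecidableEq V] (G : SimpleGraph V)
    [DecidableRel G.Adj]
    (k : ℕ) (hk : 2 ≤ k) (hkn : k ≤ Fintype.card V) (hm : 1 ≤ G.edgeFinset.card)
    (ε δ t : ℝ) (hε0 : 0 < ε) (hε1 : ε < 1 / (k + 1)) (hδ0 : 0 < δ) (hδ1 : δ < 1)
    (hδparam : 0 < (1 - δ) / 2 -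
      k * δ * (k * (k - 1) / 2 : ℝ) / ((Fintype.card V : ℝ) * ε))
    (ht : 0 < t)
    (htparam : (k + 1 : ℝ) *
        ((k * (k - 1) / 2 : ℝ) / ε + (1 / (2 * (G.edgeFinset.card : ℝ))) * t) /
        ((k * (k - 1) / 2 : ℝ) + (1 / (2 * (G.edgeFinset.card : ℝ))) * t) < 1 / ε) :
    (∃ Q : Finset V, G.IsNClique k Q) ↔
      ∃ (bE : Sym2 V → ℝ) (bV : V → ℝ),
        (∀ e ∈ G.edgeFinset, 0 ≤ bE e ∧ bE e ≤ 1) ∧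
        (∀ v, 0 ≤ bV v ∧ bV v ≤ 1) ∧
        (1 - δ) * (k * (k - 1) / 2 : ℝ) +
            (δ * ((Fintype.card V : ℝ) - k) / (Fintype.card V : ℝ)) *
              ((k * (k - 1) / 2 : ℝ) / ε) ≤
          crEv G (k * (k - 1) / 2 : ℝ) ε δ t bE bV := by
  constructor
  · rintro ⟨Q, hQ⟩
    classical
    set Kr : ℝ := (k * (k - 1) / 2 : ℝ) with hKrdef
    have hKrnat : Kr = ((k.choose 2 : ℕ) : ℝ) := by
      rw [Nat.cast_choose_two]
    have hk2 : (2:ℝ) ≤ (k:ℝ) := by exact_mod_cast hk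
    have hKr1 : 1 ≤ Kr := by rw [hKrdef]; nlinarith
    have hKr0 : 0 < Kr := by linarith
    have hn0 : 0 < (Fintype.card V : ℝ) := by
      have : 0 < Fintype.card V := by omega
      exact_mod_cast this
    refine ⟨fun e => if e ∈ Q.sym2 then 1 else 0, fun v => if v ∈ Q then 0 else 1,
      fun e _ => by dsimp only; split_ifs <;> norm_num, fun v => by dsimp only; split_ifs <;> norm_num, ?_⟩
    have hfilter : G.edgeFinset.filter (fun e => e ∈ Q.sym2)
        = Q.sym2.filter (fun e => ¬ e.IsDiag) := by
      ext e
      simp only [Finset.mem_filter]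
      constructor
      · rintro ⟨he, hq⟩
        exact ⟨hq, G.not_isDiag_of_mem_edgeFinset he⟩
      · rintro ⟨hq, hd⟩
        refine ⟨?_, hq⟩
        induction e using Sym2.ind with
        | _ x y =>
          rw [Finset.mk_mem_sym2_iff] at hq
          rw [Sym2.mk_isDiag_iff] at hd
          rw [SimpleGraph.mem_edgeFinset, SimpleGraph.mem_edgeSet]
          exact hQ.1 hq.1 hq.2 hd
    have hsum : ∑ e ∈ G.edgeFinset, (if e ∈ Q.sym2 then (1:ℝ) else 0) = Kr := by
      rw [Finset.sum_boole, hfilter, aux_sym2_card, hQ.2, hKrnat]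
    have hval0 : crVal0 G Kr (fun e => if e ∈ Q.sym2 then 1 else 0) = Kr := by
      unfold crVal0
      simp only [mul_one]
      rw [hsum, div_self hKr0.ne', max_self, div_one]
    have hvalv : ∀ v, v ∉ Q →
        crValv G Kr ε t (fun e => if e ∈ Q.sym2 then 1 else 0)
          (fun v => if v ∈ Q then 0 else 1) v = Kr / ε := by
      intro v hv
      unfold crValv
      have hz : ∀ c : ℝ, ∑ e ∈ G.edgeFinset,
          (if e ∈ Q.sym2 then (1:ℝ) else 0) * c * (if v ∈ e then t else 0) = 0 := by
        intro c
        refine Finset.sum_eq_zero fun e he => ?_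
        by_cases h1 : e ∈ Q.sym2
        · have : v ∉ e := fun hve => hv (Finset.mem_sym2_iff.mp h1 v hve)
          simp [this]
        · simp [h1]
      have hz' : ∑ e ∈ G.edgeFinset,
          (if e ∈ Q.sym2 then (1:ℝ) else 0) * (if v ∈ e then t else 0) = 0 := by
        have := hz 1
        simpa using this
      simp only [if_neg hv]
      rw [hz', hz 1, add_zero, add_zero]
      have h2 : (1:ℝ) * ε * (Kr / ε) = Kr := by field_simp
      rw [h2, div_self hKr0.ne', max_self, div_one, one_mul]
    have hvnn : ∀ v, 0 ≤ crValv G Kr ε t (fun e => if e ∈ Q.sym2 then 1 else 0)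
        (fun v => if v ∈ Q then 0 else 1) v := by
      intro v
      unfold crValv
      dsimp only
      refine div_nonneg ?_ (le_trans zero_le_one (le_max_left _ _))
      refine add_nonneg ?_ (Finset.sum_nonneg fun e _ => ?_)
      · split_ifs <;> positivity
      · split_ifs <;> positivity
    unfold crEv
    rw [hval0]
    have hsplit : ∑ v : V, (δ / (Fintype.card V : ℝ)) *
        crValv G Kr ε t (fun e => if e ∈ Q.sym2 then 1 else 0)
          (fun v => if v ∈ Q then 0 else 1) v ≥
        ∑ v ∈ Qᶜ, (δ / (Fintype.card V : ℝ)) * (Kr / ε) := by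
      have h1 : ∑ v ∈ Qᶜ, (δ / (Fintype.card V : ℝ)) * (Kr / ε) =
          ∑ v ∈ Qᶜ, (δ / (Fintype.card V : ℝ)) *
            crValv G Kr ε t (fun e => if e ∈ Q.sym2 then 1 else 0)
              (fun v => if v ∈ Q then 0 else 1) v := by
        refine Finset.sum_congr rfl fun v hv => ?_
        rw [hvalv v (Finset.mem_compl.mp hv)]
      rw [h1]
      refine Finset.sum_le_sum_of_subset_of_nonneg (Finset.subset_univ _) fun v _ _ => ?_
      exact mul_nonneg (by positivity) (hvnn v)
    have hcard : ((Qᶜ : Finset V).card : ℝ) = (Fintype.card V : ℝ) - k := by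
      rw [Finset.card_compl, hQ.2, Nat.cast_sub hkn]
    rw [Finset.sum_const, nsmul_eq_mul] at hsplit
    rw [hcard] at hsplit
    have : (δ * ((Fintype.card V : ℝ) - k) / (Fintype.card V : ℝ)) * (Kr / ε)
        = ((Fintype.card V : ℝ) - k) * ((δ / (Fintype.card V : ℝ)) * (Kr / ε)) := by
      ring
    linarith [hsplit]
  · rintro ⟨bE, bV, hbE, hbV, hEv⟩
    classical
    set Kr : ℝ := (k * (k - 1) / 2 : ℝ) with hKrdef
    set n : ℝ := (Fintype.card V : ℝ) with hndef
    set m : ℝ := (G.edgeFinset.card : ℝ) with hmdef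
    set α : ℝ := 1 / (2 * m) with hαdef
    have hKrnat : Kr = ((k.choose 2 : ℕ) : ℝ) := by rw [Nat.cast_choose_two]
    have hk2 : (2:ℝ) ≤ (k:ℝ) := by exact_mod_cast hk
    have hKr1 : 1 ≤ Kr := by rw [hKrdef]; nlinarith
    have hKr0 : 0 < Kr := by linarith
    have hn0 : 0 < n := by
      have : 0 < Fintype.card V := by omega
      rw [hndef]; exact_mod_cast this
    have hmR : (1:ℝ) ≤ m := by rw [hmdef]; exact_mod_cast hm
    have hm0 : 0 < m := by linarith
    have hα0 : 0 < α := by rw [hαdef]; positivity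
    have hαm : m * α = 1 / 2 := by rw [hαdef]; field_simp
    have hε1' : ε < 1 := by
      have h1 : (1:ℝ) / ((k:ℝ) + 1) ≤ 1 := by
        rw [div_le_one (by positivity)]; linarith
      linarith
    -- incident mass
    set Tv : V → ℝ := fun v => ∑ e ∈ G.edgeFinset, bE e * (if v ∈ e then 1 else 0) with hTvdef
    have hT0 : ∀ v, 0 ≤ Tv v := by
      intro v
      refine Finset.sum_nonneg fun e he => ?_
      have := (hbE e he).1
      split_ifs <;> simp [this]
    have hvalv : ∀ v, crValv G Kr ε t bE bV v =
        (bV v * (Kr / ε) + t * Tv v) / max 1 ((bV v * Kr + t * Tv v) / Kr) := by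
      intro v
      unfold crValv
      have e1 : ∑ e ∈ G.edgeFinset, bE e * (if v ∈ e then t else 0) = t * Tv v := by
        rw [hTvdef]; dsimp only; rw [Finset.mul_sum]
        refine Finset.sum_congr rfl fun e _ => ?_
        split_ifs <;> ring
      have e2 : ∑ e ∈ G.edgeFinset, bE e * 1 * (if v ∈ e then t else 0) = t * Tv v := by
        rw [← e1]
        refine Finset.sum_congr rfl fun e _ => by ring
      have e3 : bV v * ε * (Kr / ε) = bV v * Kr := by
        field_simp
      rw [e1, e2, e3]
    set M : ℝ := ∑ e ∈ G.edgeFinset, bE e with hMdef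
    have hM0 : 0 ≤ M := Finset.sum_nonneg fun e he => (hbE e he).1
    have hval0e : crVal0 G Kr bE = M / max 1 (M / Kr) := by
      unfold crVal0
      simp only [mul_one]
      rw [hMdef]
    have hval0K : crVal0 G Kr bE ≤ Kr := by
      rw [hval0e]; exact aux_val_le hKr0 hM0 le_rfl
    have hval0M : crVal0 G Kr bE ≤ M := by
      rw [hval0e]; exact div_le_self hM0 (le_max_left _ _)
    have hub1 : ∀ v, crValv G Kr ε t bE bV v ≤ Kr / ε := by
      intro v
      rw [hvalv v]
      refine aux_val_le_div hKr0 hε0 ?_ ?_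
      · have := (hbV v).1; have := hT0 v; positivity
      · have e3 : ε * (bV v * (Kr / ε)) = bV v * Kr := by field_simp
        nlinarith [mul_nonneg (mul_nonneg (by linarith : (0:ℝ) ≤ 1 - ε) ht.le) (hT0 v)]
    set A : Finset V := Finset.univ.filter (fun v => α ≤ Tv v) with hAdef
    set B : ℝ := Kr * (Kr / ε + t * α) / (Kr + t * α) with hBdef
    have hB0 : 0 ≤ B := by rw [hBdef]; positivity
    have hBlt : ((k:ℝ) + 1) * B < Kr / ε := by
      have h1 := mul_lt_mul_of_pos_left htparam hKr0
      have e1 : Kr * ((k + 1 : ℝ) * (Kr / ε + α * t) / (Kr + α * t)) = ((k:ℝ)+1) * B := by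
        rw [hBdef]; ring
      have e2 : Kr * (1 / ε) = Kr / ε := by ring
      calc ((k:ℝ)+1) * B = Kr * ((k + 1 : ℝ) * (Kr / ε + α * t) / (Kr + α * t)) := e1.symm
      _ < Kr * (1/ε) := h1
      _ = Kr / ε := e2
    have hub2 : ∀ v ∈ A, crValv G Kr ε t bE bV v ≤ B := by
      intro v hv
      rw [hvalv v, hBdef]
      have hvA : α ≤ Tv v := (Finset.mem_filter.mp hv).2
      exact aux_caseA hKr0 hε0 hε1' ht hα0 (hbV v).1 (hbV v).2 hvA
    unfold crEv at hEv
    -- global sum bound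
    have hsum1 : ∑ v : V, (δ / n) * crValv G Kr ε t bE bV v ≤ δ * (Kr / ε) := by
      have h1 : ∑ v : V, (δ / n) * crValv G Kr ε t bE bV v ≤
          ∑ _v : V, (δ / n) * (Kr / ε) :=
        Finset.sum_le_sum fun v _ => mul_le_mul_of_nonneg_left (hub1 v) (by positivity)
      rw [Finset.sum_const, Finset.card_univ, nsmul_eq_mul] at h1
      have e1 : (Fintype.card V : ℝ) * ((δ / n) * (Kr / ε)) = δ * (Kr / ε) := by
        rw [← hndef]; field_simp
      linarith
    -- M is large
    have hM : Kr - 1/2 < M := by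
      have e1 : (δ * (n - k) / n) * (Kr / ε) = δ * (Kr / ε) - k * δ * Kr / (n * ε) := by
        field_simp
      have hδp : k * δ * Kr / (n * ε) < (1 - δ) / 2 := by linarith [hδparam]
      have h2 : (1 - δ) * (Kr - 1/2) < (1 - δ) * crVal0 G Kr bE := by
        nlinarith [hEv, hsum1, e1, hδp]
      have h3 : Kr - 1/2 < crVal0 G Kr bE :=
        lt_of_mul_lt_mul_left h2 (by linarith)
      linarith
    -- |A| ≤ k
    have hAk : A.card ≤ k := by
      by_contra hcon
      push_neg at hcon
      have haR : ((k:ℝ) + 1) ≤ (A.card : ℝ) := by exact_mod_cast hcon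
      have ha0 : (0:ℝ) < (A.card : ℝ) := by linarith
      have hsum2 : ∑ v : V, (δ / n) * crValv G Kr ε t bE bV v ≤
          (δ / n) * ((A.card : ℝ) * B + (n - A.card) * (Kr / ε)) := by
        have h1 : ∑ v : V, (δ / n) * crValv G Kr ε t bE bV v ≤
            ∑ v : V, (δ / n) * (if v ∈ A then B else Kr / ε) := by
          refine Finset.sum_le_sum fun v _ => mul_le_mul_of_nonneg_left ?_ (by positivity)
          split_ifs with h
          · exact hub2 v h
          · exact hub1 v
        have h2 : ∑ v : V, (if v ∈ A then B else Kr / ε) =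
            (A.card : ℝ) * B + (n - A.card) * (Kr / ε) := by
          rw [← Finset.sum_add_sum_compl A]
          have e1 : ∑ v ∈ A, (if v ∈ A then B else Kr / ε) = (A.card : ℝ) * B := by
            rw [Finset.sum_congr rfl fun v hv => if_pos hv, Finset.sum_const, nsmul_eq_mul]
          have e2 : ∑ v ∈ Aᶜ, (if v ∈ A then B else Kr / ε) = (n - A.card) * (Kr / ε) := by
            rw [Finset.sum_congr rfl fun v hv => if_neg (Finset.mem_compl.mp hv),
              Finset.sum_const, nsmul_eq_mul, Finset.card_compl,
              Nat.cast_sub (Finset.card_le_univ A), hndef]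
          rw [e1, e2]
        calc ∑ v : V, (δ / n) * crValv G Kr ε t bE bV v
            ≤ ∑ v : V, (δ / n) * (if v ∈ A then B else Kr / ε) := h1
          _ = (δ / n) * ∑ v : V, (if v ∈ A then B else Kr / ε) := by rw [Finset.mul_sum]
          _ = (δ / n) * ((A.card : ℝ) * B + (n - A.card) * (Kr / ε)) := by rw [h2]
      -- key strict inequality
      have hKrε : 0 < Kr / ε := by positivity
      have g1 : (A.card : ℝ) ≤ ((k:ℝ) + 1) * ((A.card : ℝ) - k) := by
        nlinarith [mul_nonneg (by linarith : (0:ℝ) ≤ (k:ℝ)) (by linarith : (0:ℝ) ≤ (A.card:ℝ) - ((k:ℝ)+1))]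
      have f1 : (A.card : ℝ) * (((k:ℝ)+1) * B) < (A.card : ℝ) * (Kr / ε) :=
        mul_lt_mul_of_pos_left hBlt ha0
      have g2 : (A.card : ℝ) * (Kr / ε) ≤ ((k:ℝ)+1) * (((A.card:ℝ) - k) * (Kr / ε)) := by
        nlinarith [mul_le_mul_of_nonneg_right g1 hKrε.le]
      have g3 : ((k:ℝ)+1) * ((A.card:ℝ) * B) < ((k:ℝ)+1) * (((A.card:ℝ) - k) * (Kr / ε)) := by
        nlinarith [f1, g2]
      have g4 : (A.card:ℝ) * B < ((A.card:ℝ) - k) * (Kr / ε) :=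
        lt_of_mul_lt_mul_left g3 (by positivity : (0:ℝ) ≤ (k:ℝ)+1)
      have key : (A.card : ℝ) * B + (n - A.card) * (Kr / ε) < (n - k) * (Kr / ε) := by
        linarith [g4]
      have h5 : (δ / n) * ((A.card : ℝ) * B + (n - A.card) * (Kr / ε)) <
          (δ / n) * ((n - k) * (Kr / ε)) :=
        mul_lt_mul_of_pos_left key (by positivity)
      have h6 : (δ * (n - k) / n) * (Kr / ε) = (δ / n) * ((n - k) * (Kr / ε)) := by ring
      have h7 : (1 - δ) * crVal0 G Kr bE ≤ (1 - δ) * Kr :=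
        mul_le_mul_of_nonneg_left hval0K (by linarith)
      linarith [hEv, hsum2, h5, h7]
    -- edge counting
    set Egood : Finset (Sym2 V) := G.edgeFinset.filter (fun e => ∀ x ∈ e, x ∈ A) with hEgdef
    have hgood_le : ∑ e ∈ Egood, bE e ≤ (Egood.card : ℝ) := by
      have := Finset.sum_le_card_nsmul Egood bE 1
        (fun e he => (hbE e (Finset.mem_filter.mp he).1).2)
      rwa [nsmul_eq_mul, mul_one] at this
    have hbad_le : ∑ e ∈ G.edgeFinset.filter (fun e => ¬ ∀ x ∈ e, x ∈ A), bE e ≤ 1/2 := by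
      have hble : ∀ e ∈ G.edgeFinset.filter (fun e => ¬ ∀ x ∈ e, x ∈ A), bE e ≤ α := by
        intro e he
        obtain ⟨heE, hx⟩ := Finset.mem_filter.mp he
        push_neg at hx
        obtain ⟨x, hxe, hxA⟩ := hx
        have hTx : Tv x < α := by
          by_contra hge
          push_neg at hge
          exact hxA (Finset.mem_filter.mpr ⟨Finset.mem_univ x, hge⟩)
        have hle : bE e ≤ Tv x := by
          have h1 : bE e * (if x ∈ e then (1:ℝ) else 0) = bE e := by rw [if_pos hxe, mul_one]
          rw [hTvdef]
          calc bE e = bE e * (if x ∈ e then (1:ℝ) else 0) := h1.symm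
            _ ≤ ∑ e' ∈ G.edgeFinset, bE e' * (if x ∈ e' then (1:ℝ) else 0) := by
              refine Finset.single_le_sum (f := fun e' => bE e' * (if x ∈ e' then (1:ℝ) else 0))
                (fun e' he' => ?_) heE
              have := (hbE e' he').1
              split_ifs <;> simp [this]
        linarith
      have h1 := Finset.sum_le_card_nsmul _ bE α hble
      rw [nsmul_eq_mul] at h1
      have h2 : ((G.edgeFinset.filter (fun e => ¬ ∀ x ∈ e, x ∈ A)).card : ℝ) * α ≤ m * α := by
        refine mul_le_mul_of_nonneg_right ?_ hα0.le
        rw [hmdef]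
        exact_mod_cast Finset.card_filter_le _ _
      linarith [hαm]
    have hMsplit : M = ∑ e ∈ Egood, bE e +
        ∑ e ∈ G.edgeFinset.filter (fun e => ¬ ∀ x ∈ e, x ∈ A), bE e := by
      rw [hMdef, hEgdef]
      exact (Finset.sum_filter_add_sum_filter_not _ _ _).symm
    have hqR : Kr - 1 < (Egood.card : ℝ) := by linarith
    have hqKr : k.choose 2 ≤ Egood.card := by
      have h1 : ((k.choose 2 : ℕ) : ℝ) < (Egood.card : ℝ) + 1 := by
        rw [← hKrnat]; linarith
      have h2 : k.choose 2 < Egood.card + 1 := by exact_mod_cast h1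
      omega
    have hsub : Egood ⊆ A.sym2.filter (fun e => ¬ e.IsDiag) := by
      intro e he
      obtain ⟨heE, hall⟩ := Finset.mem_filter.mp he
      exact Finset.mem_filter.mpr ⟨Finset.mem_sym2_iff.mpr hall,
        G.not_isDiag_of_mem_edgeFinset heE⟩
    have hqle : Egood.card ≤ A.card.choose 2 := by
      have := Finset.card_le_card hsub
      rwa [aux_sym2_card] at this
    have hAcard : A.card = k := by
      by_contra hne
      have hlt : A.card < k := lt_of_le_of_ne hAk hne
      have h1 : A.card.choose 2 ≤ (k-1).choose 2 := Nat.choose_le_choose 2 (by omega)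
      have hp : k.choose 2 = (k-1) + (k-1).choose 2 := by
        conv_lhs => rw [← Nat.succ_pred_eq_of_pos (by omega : 0 < k)]
        rw [Nat.choose_succ_succ, Nat.choose_one_right]
        simp [Nat.pred_eq_sub_one]
      omega
    have heq : Egood = A.sym2.filter (fun e => ¬ e.IsDiag) := by
      refine Finset.eq_of_subset_of_card_le hsub ?_
      rw [aux_sym2_card, hAcard]
      exact hqKr
    refine ⟨A, ?_, hAcard⟩
    intro x hx y hy hxy
    have hmem : s(x, y) ∈ A.sym2.filter (fun e => ¬ e.IsDiag) := by
      refine Finset.mem_filter.mpr ⟨Finset.mk_mem_sym2_iff.mpr ⟨hx, hy⟩, ?_⟩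
      rw [Sym2.mk_isDiag_iff]
      exact hxy
    rw [← heq] at hmem
    have := (Finset.mem_filter.mp hmem).1
    rwa [SimpleGraph.mem_edgeFinset, SimpleGraph.mem_edgeSet] at this
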